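/- arXiv:2006.12491 — 2 statements merged into one kernel-verified Lean document; each statement's English description precedes it below -/
import Mathlib

section
/- Let A be an n×n real matrix (n ≥ 2) and suppose Av = λv for some λ ∈ ℝ and some v = (v_1, …, v_n)^T ∈ ℝ^n with v_i ≠ 0 for every i. Let S = diag(v) and B = S^{-1} A S. If λ₂ is a complex eigenvalue of A with λ₂ ≠ λ, then λ₂ lies in the Gershgorin region of the second type of B^T. -/
open Matrix
open scoped ENNReal

/-- Non-increasing (descending) sort of a list of reals. -/
noncomputable def sortDesc (l : List ℝ) : List ℝ := (l.insertionSort (· ≤ ·)).reverse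

/-- Given the descending rearrangement `l` of `n` numbers, the sum of the largest
(about) half minus the sum of the smallest (about) half, skipping the middle
element when `n` is odd. -/
noncomputable def halfSumDiff (n : ℕ) (l : List ℝ) : ℝ :=
  if n % 2 = 1 then (l.take ((n - 1) / 2)).sum - (l.drop ((n + 1) / 2)).sum
  else (l.take (n / 2)).sum - (l.drop (n / 2)).sum

/-- Radius of the `i`-th Gershgorin disc of the second type of `M`, computed from
the `i`-th row of `M` with the diagonal entry replaced by `0`. -/
noncomputable def secondTypeRadius {n : ℕ} (M : Matrix (Fin n) (Fin n) ℝ) (i : Fin n) : ℝ :=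
  halfSumDiff n (sortDesc (List.ofFn fun j : Fin n => if j = i then 0 else M i j))

/-- The `i`-th Gershgorin disc of the second type of `M`. -/
noncomputable def secondTypeDisc {n : ℕ} (M : Matrix (Fin n) (Fin n) ℝ) (i : Fin n) : Set ℂ :=
  Metric.closedBall ((M i i : ℝ) : ℂ) (secondTypeRadius M i)

/-- The Gershgorin region of the second type of `M`. -/
noncomputable def secondTypeRegion {n : ℕ} (M : Matrix (Fin n) (Fin n) ℝ) : Set ℂ :=
  ⋃ i : Fin n, secondTypeDisc M i

/-- `μ` is a (complex) eigenvalue of the real matrix `A`, i.e. a complex root of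
its characteristic polynomial. -/
def IsEigenvalueC {n : ℕ} (A : Matrix (Fin n) (Fin n) ℝ) (μ : ℂ) : Prop :=
  ((A.map ((↑) : ℝ → ℂ)).charpoly).IsRoot μ

/-- The `k`-th largest element (1-indexed) among the `n - 1` off-diagonal entries of
column `j` of `B`. -/
noncomputable def kthLargestOffDiag {n : ℕ} (B : Matrix (Fin n) (Fin n) ℝ) (j : Fin n)
    (k : ℕ) : ℝ :=
  (sortDesc (((List.ofFn fun i : Fin n => B i j).eraseIdx j.val))).getD (k - 1) 0

/-- The ℓ_p norm of a vector in ℝ^n. -/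
noncomputable def lpNorm {n : ℕ} (p : ℝ≥0∞) (x : Fin n → ℝ) : ℝ :=
  @norm (PiLp p fun _ : Fin n => ℝ) _ ((WithLp.equiv p (∀ _ : Fin n, ℝ)).symm x)

/-- The seminorm-like quantity `τ_p(B)`: the supremum of `‖Bᵀ x‖_p` over all real
vectors `x` with `xᵀ e = 0` and `‖x‖_p = 1`. -/
noncomputable def tau {n : ℕ} (p : ℝ≥0∞) (B : Matrix (Fin n) (Fin n) ℝ) : ℝ :=
  sSup { t : ℝ | ∃ x : Fin n → ℝ, (∑ i, x i) = 0 ∧ lpNorm p x = 1 ∧ t = lpNorm p (Bᵀ *ᵥ x) }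

/-- The Ostrowski–Brauer set `Γ(M)` of a real square matrix `M`. -/
noncomputable def brauerSet {n : ℕ} (M : Matrix (Fin n) (Fin n) ℝ) : Set ℂ :=
  ⋃ (i : Fin n) (j : Fin n) (_ : i < j),
    { y : ℂ | ‖y - (M i i : ℝ)‖ * ‖y - (M j j : ℝ)‖ ≤
        (∑ k ∈ Finset.univ.filter fun k => k ≠ i, |M i k|) *
        (∑ k ∈ Finset.univ.filter fun k => k ≠ j, |M j k|) }

/-- `cs_j(A)` from Definition 2.3: sorted column sums difference. -/
noncomputable def csCol {n : ℕ} (A : Matrix (Fin n) (Fin n) ℝ) (j : Fin n) : ℝ :=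
  halfSumDiff n (sortDesc (List.ofFn fun i : Fin n => A i j))

/-! ### Auxiliary lemmas -/

private lemma sum_map_sub_const' (t : List ℝ) (c : ℝ) :
    (t.map (fun x => x - c)).sum = t.sum - t.length * c := by
  induction t with
  | nil => simp
  | cons a t ih => simp [ih]; ring

private lemma sum_map_const_sub' (t : List ℝ) (c : ℝ) :
    (t.map (fun x => c - x)).sum = t.length * c - t.sum := by
  induction t with
  | nil => simp
  | cons a t ih => simp [ih]; ring

private lemma halfSumDiff_eq' (n : ℕ) (l : List ℝ) :
    halfSumDiff n l = (l.take (n / 2)).sum - (l.drop (n - n / 2)).sum := by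
  unfold halfSumDiff
  split
  · rw [show (n - 1) / 2 = n / 2 by omega, show (n + 1) / 2 = n - n / 2 by omega]
  · have h2 : n - n / 2 = n / 2 := by omega
    rw [h2]

private lemma key_median' (n : ℕ) (hn : 0 < n) (l : List ℝ) (hlen : l.length = n)
    (hs : l.Pairwise (fun a b => b ≤ a)) :
    ∃ c : ℝ, (l.map (fun x => |x - c|)).sum ≤ halfSumDiff n l := by
  set k := n / 2 with hk
  set m := n - n / 2 with hm
  have hkn : k < n := by omega
  have hkm : k ≤ m := by omega
  have hmn : m ≤ n := by omega
  refine ⟨l.getD k 0, ?_⟩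
  set c := l.getD k 0 with hc
  have hdropk : l.drop k = c :: l.drop (k + 1) := by
    rw [hc, List.getD_eq_getElem l 0 (by omega)]
    exact List.drop_eq_getElem_cons (by omega)
  have hpw : l.Pairwise (fun a b => b ≤ a) := hs
  have hub : ∀ b ∈ l.drop k, b ≤ c := by
    have hsub : (l.drop k).Pairwise (fun a b => b ≤ a) :=
      hpw.sublist (List.drop_sublist k l)
    rw [hdropk] at hsub
    intro b hb
    rw [hdropk] at hb
    rcases List.mem_cons.mp hb with h | h
    · exact h.le
    · exact (List.pairwise_cons.mp hsub).1 b h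
  have hlb : ∀ a ∈ l.take k, c ≤ a := by
    have := hpw
    rw [← List.take_append_drop k l, List.pairwise_append] at this
    intro a ha
    exact this.2.2 a ha c (by rw [hdropk]; exact List.mem_cons_self)
  set f : ℝ → ℝ := fun x => |x - c| with hf
  have hsum : (l.map f).sum
      = ((l.take k).map f).sum + (((l.drop k).take (m - k)).map f).sum
        + ((l.drop m).map f).sum := by
    conv_lhs => rw [← List.take_append_drop m l,
      show l.take m = l.take k ++ (l.drop k).take (m - k) by
        rw [← List.take_add]; congr 1; omega]
    simp [List.sum_append, add_assoc]
  have htake : ((l.take k).map f).sum = (l.take k).sum - k * c := by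
    rw [show (l.take k).map f = (l.take k).map (fun x => x - c) from
      List.map_congr_left fun x hx => abs_of_nonneg (sub_nonneg.mpr (hlb x hx))]
    rw [sum_map_sub_const', List.length_take, hlen, min_eq_left hkn.le]
  have hdropsub : ∀ x ∈ l.drop m, x ≤ c := by
    intro x hx
    apply hub
    have : l.drop m = (l.drop k).drop (m - k) := by
      rw [List.drop_drop]; congr 1; omega
    rw [this] at hx
    exact (List.drop_sublist _ _).subset hx
  have hdrop : ((l.drop m).map f).sum = k * c - (l.drop m).sum := by
    rw [show (l.drop m).map f = (l.drop m).map (fun x => c - x) from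
      List.map_congr_left fun x hx => show |x - c| = c - x by
        rw [abs_of_nonpos (sub_nonpos.mpr (hdropsub x hx))]; ring]
    rw [sum_map_const_sub', List.length_drop, hlen, show n - m = k by omega]
  have hmid : (((l.drop k).take (m - k)).map f).sum = 0 := by
    rcases Nat.eq_or_lt_of_le hkm with h | h
    · rw [← h]; simp
    · have : m - k = 1 := by omega
      rw [this, hdropk]
      simp [hf]
  rw [halfSumDiff_eq', hsum, htake, hmid, hdrop]
  ring_nf
  exact le_refl _

private lemma sortDesc_perm' (l : List ℝ) : (sortDesc l).Perm l :=
  (List.reverse_perm _).trans (List.perm_insertionSort _ l)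

private lemma sortDesc_sorted' (l : List ℝ) : (sortDesc l).Pairwise (fun a b => b ≤ a) := by
  have h := List.pairwise_insertionSort (· ≤ ·) l
  unfold sortDesc
  rw [List.pairwise_reverse]
  exact h

private lemma sortDesc_length' (l : List ℝ) : (sortDesc l).length = l.length := by
  simp [sortDesc]

private lemma eigvec_exists' {n : ℕ} (A : Matrix (Fin n) (Fin n) ℝ)
    (v : Fin n → ℝ) (hv : ∀ i, v i ≠ 0)
    (S B : Matrix (Fin n) (Fin n) ℝ) (hS : S = Matrix.diagonal v) (hB : B = S⁻¹ * A * S)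
    (mu : ℂ) (hmu : ((A.map ((↑) : ℝ → ℂ)).charpoly).IsRoot mu) :
    ∃ w : Fin n → ℂ, w ≠ 0 ∧ (B.map ((↑) : ℝ → ℂ))ᵀ *ᵥ w = mu • w := by
  set A' : Matrix (Fin n) (Fin n) ℂ := A.map ((↑) : ℝ → ℂ) with hA'
  set B' : Matrix (Fin n) (Fin n) ℂ := B.map ((↑) : ℝ → ℂ) with hB'
  have hA0 : (Matrix.diagonal (fun _ : Fin n => mu) - A').det = 0 := by
    have h1 : Polynomial.eval mu A'.charpoly = 0 := hmu
    rw [Matrix.charpoly] at h1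
    have h2 : Polynomial.eval mu (Matrix.charmatrix A').det
        = ((Matrix.charmatrix A').map (Polynomial.eval mu)).det :=
      RingHom.map_det (Polynomial.evalRingHom mu) _
    rw [h2] at h1
    have h3 : (Matrix.charmatrix A').map (Polynomial.eval mu)
        = Matrix.diagonal (fun _ : Fin n => mu) - A' := by
      ext i j
      by_cases h : i = j <;>
        simp [Matrix.charmatrix_apply, Matrix.map_apply, Matrix.diagonal_apply, h]
    rwa [h3] at h1
  set D : Fin n → ℂ := fun i => (v i : ℂ) with hD
  have hD0 : ∀ i, D i ≠ 0 := fun i => by simpa [hD] using hv i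
  have hmul : ∀ M N : Matrix (Fin n) (Fin n) ℝ,
      (M * N).map ((↑) : ℝ → ℂ) = M.map ((↑) : ℝ → ℂ) * N.map ((↑) : ℝ → ℂ) :=
    fun M N => Matrix.map_mul (f := Complex.ofRealHom)
  have hSinv : S⁻¹ = Matrix.diagonal (fun i => (v i)⁻¹) := by
    rw [hS]
    apply Matrix.inv_eq_left_inv
    rw [Matrix.diagonal_mul_diagonal,
      show (fun i => (v i)⁻¹ * v i) = fun _ : Fin n => (1 : ℝ) from
        funext fun i => inv_mul_cancel₀ (hv i), Matrix.diagonal_one]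
  have hBmap : B' = Matrix.diagonal (fun i => (D i)⁻¹) * A' * Matrix.diagonal D := by
    rw [hB', hB, hSinv, hS, hmul, hmul]
    congr 1
    · congr 1
      rw [show (Matrix.diagonal fun i => (v i)⁻¹).map ((↑) : ℝ → ℂ)
          = Matrix.diagonal (fun i => (((v i)⁻¹ : ℝ) : ℂ)) from
        Matrix.diagonal_map (by simp)]
      rw [show (fun i : Fin n => (((v i)⁻¹ : ℝ) : ℂ)) = fun i => (D i)⁻¹ from
        funext fun i => by simp [hD]]
    · exact Matrix.diagonal_map (by simp)
  have h5 : Matrix.diagonal (fun i => (D i)⁻¹) * Matrix.diagonal (fun _ : Fin n => mu)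
      * Matrix.diagonal D = Matrix.diagonal (fun _ : Fin n => mu) := by
    rw [Matrix.diagonal_mul_diagonal, Matrix.diagonal_mul_diagonal]
    rw [show (fun i => (D i)⁻¹ * mu * D i) = fun _ : Fin n => mu from
      funext fun i => by
        rw [mul_comm ((D i)⁻¹) mu, mul_assoc, inv_mul_cancel₀ (hD0 i), mul_one]]
  have hconj : Matrix.diagonal (fun _ : Fin n => mu) - B'
      = Matrix.diagonal (fun i => (D i)⁻¹) * (Matrix.diagonal (fun _ : Fin n => mu) - A')
        * Matrix.diagonal D := by
    rw [mul_sub, sub_mul, h5, hBmap]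
  have hB0t : ((Matrix.diagonal (fun _ : Fin n => mu) - B')ᵀ).det = 0 := by
    rw [Matrix.det_transpose, hconj, Matrix.det_mul, Matrix.det_mul, hA0, mul_zero, zero_mul]
  obtain ⟨w, hw0, hw⟩ := Matrix.exists_mulVec_eq_zero_iff.mpr hB0t
  refine ⟨w, hw0, ?_⟩
  rw [Matrix.transpose_sub, Matrix.diagonal_transpose, Matrix.sub_mulVec] at hw
  have h6 : Matrix.diagonal (fun _ : Fin n => mu) *ᵥ w = mu • w := by
    funext i
    simp [Matrix.mulVec_diagonal]
  rw [h6] at hw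
  exact (sub_eq_zero.mp hw).symm

private lemma rowsum_lam' {n : ℕ} (A : Matrix (Fin n) (Fin n) ℝ)
    (lam : ℝ) (v : Fin n → ℝ) (hv : ∀ i, v i ≠ 0) (hAv : A *ᵥ v = lam • v)
    (S B : Matrix (Fin n) (Fin n) ℝ) (hS : S = Matrix.diagonal v) (hB : B = S⁻¹ * A * S) :
    ∀ k, ∑ j, B k j = lam := by
  have hSinv : S⁻¹ = Matrix.diagonal (fun i => (v i)⁻¹) := by
    rw [hS]
    apply Matrix.inv_eq_left_inv
    rw [Matrix.diagonal_mul_diagonal,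
      show (fun i => (v i)⁻¹ * v i) = fun _ : Fin n => (1 : ℝ) from
        funext fun i => inv_mul_cancel₀ (hv i), Matrix.diagonal_one]
  have h1 : S *ᵥ (fun _ => 1) = v := by
    funext x
    rw [hS, Matrix.mulVec_diagonal, mul_one]
  have h2 : B *ᵥ (fun _ => 1) = fun _ => lam := by
    rw [hB, ← Matrix.mulVec_mulVec, ← Matrix.mulVec_mulVec, h1, hAv,
      Matrix.mulVec_smul, hSinv]
    funext x
    rw [Pi.smul_apply, Matrix.mulVec_diagonal, inv_mul_cancel₀ (hv x)]
    simp
  intro k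
  have := congrFun h2 k
  rw [Matrix.mulVec, dotProduct] at this
  simpa using this

private lemma gersh_est' {n : ℕ} (B' : Matrix (Fin n) (Fin n) ℂ) (mu : ℂ) (w : Fin n → ℂ)
    (hw : ∀ i, ∑ j, B' j i * w j = mu * w i)
    (hsum : ∑ j, w j = 0)
    (i : Fin n) (hmax : ∀ j, ‖w j‖ ≤ ‖w i‖)
    (hwi : w i ≠ 0) (c : ℂ) :
    ‖mu - B' i i + c‖ ≤ ∑ j ∈ Finset.univ.erase i, ‖B' j i - c‖ := by
  have E1 : ∑ j ∈ Finset.univ.erase i, B' j i * w j = mu * w i - B' i i * w i := by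
    have h := hw i
    rw [← Finset.add_sum_erase Finset.univ (fun j => B' j i * w j) (Finset.mem_univ i)] at h
    linear_combination h
  have E2 : ∑ j ∈ Finset.univ.erase i, w j = -w i := by
    rw [← Finset.add_sum_erase Finset.univ w (Finset.mem_univ i)] at hsum
    linear_combination hsum
  have E3 : (mu - B' i i + c) * w i = ∑ j ∈ Finset.univ.erase i, (B' j i - c) * w j := by
    have : ∑ j ∈ Finset.univ.erase i, (B' j i - c) * w j
        = (∑ j ∈ Finset.univ.erase i, B' j i * w j) - c * ∑ j ∈ Finset.univ.erase i, w j := by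
      rw [Finset.mul_sum, ← Finset.sum_sub_distrib]
      exact Finset.sum_congr rfl fun j _ => by ring
    rw [this, E1, E2]
    ring
  have E4 : ‖mu - B' i i + c‖ * ‖w i‖
      ≤ (∑ j ∈ Finset.univ.erase i, ‖B' j i - c‖) * ‖w i‖ := by
    rw [← norm_mul, E3]
    calc ‖∑ j ∈ Finset.univ.erase i, (B' j i - c) * w j‖
        ≤ ∑ j ∈ Finset.univ.erase i, ‖(B' j i - c) * w j‖ :=
          norm_sum_le _ _
      _ ≤ ∑ j ∈ Finset.univ.erase i, ‖B' j i - c‖ * ‖w i‖ := by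
          refine Finset.sum_le_sum fun j _ => ?_
          rw [norm_mul]
          exact mul_le_mul_of_nonneg_left (hmax j) (norm_nonneg _)
      _ = (∑ j ∈ Finset.univ.erase i, ‖B' j i - c‖) * ‖w i‖ := by
          rw [Finset.sum_mul]
  exact le_of_mul_le_mul_right E4 (norm_pos_iff.mpr hwi)

/-- Theorem 3: if `A v = λ v` with all components of `v` nonzero and
`B = S⁻¹ A S` with `S = diag v`, then every eigenvalue of `A` other than `λ` lies in
the Gershgorin region of the second type of `Bᵀ`. -/
theorem stmt2 {n : ℕ} (hn : 2 ≤ n) (A : Matrix (Fin n) (Fin n) ℝ)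
    (lam : ℝ) (v : Fin n → ℝ) (hv : ∀ i, v i ≠ 0) (hAv : A *ᵥ v = lam • v)
    (S B : Matrix (Fin n) (Fin n) ℝ) (hS : S = Matrix.diagonal v) (hB : B = S⁻¹ * A * S)
    (mu : ℂ) (hmu : IsEigenvalueC A mu) (hne : mu ≠ (lam : ℂ)) :
    mu ∈ secondTypeRegion Bᵀ := by
  set B' : Matrix (Fin n) (Fin n) ℂ := B.map ((↑) : ℝ → ℂ) with hB'
  obtain ⟨w, hw0, hweig⟩ := eigvec_exists' A v hv S B hS hB mu hmu
  have hw : ∀ i, ∑ j, B' j i * w j = mu * w i := by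
    intro i
    have := congrFun hweig i
    rw [Matrix.mulVec, dotProduct] at this
    simpa [Matrix.transpose_apply, hB', Matrix.map_apply] using this
  -- complex row sums
  have hrow : ∀ k, ∑ j, B k j = lam := rowsum_lam' A lam v hv hAv S B hS hB
  have hrowC : ∀ k, ∑ j, B' k j = (lam : ℂ) := by
    intro k
    simp only [hB', Matrix.map_apply, ← Complex.ofReal_sum, hrow k]
  -- sum of eigenvector entries is zero
  have hsumw : ∑ j, w j = 0 := by
    have key : (mu - (lam : ℂ)) * ∑ j, w j = 0 := by
      have h1 : mu * ∑ j, w j = (lam : ℂ) * ∑ j, w j := by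
        calc mu * ∑ j, w j = ∑ i, mu * w i := by rw [Finset.mul_sum]
          _ = ∑ i, ∑ j, B' j i * w j := Finset.sum_congr rfl fun i _ => (hw i).symm
          _ = ∑ j, ∑ i, B' j i * w j := Finset.sum_comm
          _ = ∑ j, (∑ i, B' j i) * w j := Finset.sum_congr rfl fun j _ =>
                (Finset.sum_mul _ _ _).symm
          _ = ∑ j, (lam : ℂ) * w j := Finset.sum_congr rfl fun j _ => by rw [hrowC j]
          _ = (lam : ℂ) * ∑ j, w j := (Finset.mul_sum _ _ _).symm
      linear_combination h1
    rcases mul_eq_zero.mp key with h | h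
    · exact absurd (sub_eq_zero.mp h) hne
    · exact h
  -- pick index with maximal modulus
  obtain ⟨i, -, hmax'⟩ := Finset.exists_max_image Finset.univ
    (fun j => ‖w j‖) ⟨⟨0, by omega⟩, Finset.mem_univ _⟩
  have hmax : ∀ j, ‖w j‖ ≤ ‖w i‖ :=
    fun j => hmax' j (Finset.mem_univ j)
  have hwi : w i ≠ 0 := by
    intro h
    apply hw0
    funext j
    have h1 := hmax j
    rw [h] at h1
    simp only [norm_zero] at h1
    exact norm_eq_zero.mp (le_antisymm h1 (norm_nonneg _))
  -- the list of the i-th row of Bᵀ with diagonal replaced by 0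
  set l0 : List ℝ := List.ofFn (fun j : Fin n => if j = i then 0 else Bᵀ i j) with hl0
  have hlen : (sortDesc l0).length = n := by
    rw [sortDesc_length', hl0, List.length_ofFn]
  obtain ⟨c, hc⟩ := key_median' n (by omega) (sortDesc l0) hlen (sortDesc_sorted' l0)
  -- rewrite the list sum as a Finset sum
  have hls : ((sortDesc l0).map (fun x => |x - c|)).sum
      = |c| + ∑ j ∈ Finset.univ.erase i, |B j i - c| := by
    rw [((sortDesc_perm' l0).map (fun x => |x - c|)).sum_eq]
    rw [hl0, List.map_ofFn, List.sum_ofFn]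
    simp only [Function.comp_apply]
    rw [← Finset.add_sum_erase Finset.univ
      (fun j : Fin n => |(if j = i then 0 else Bᵀ i j) - c|)
      (Finset.mem_univ i)]
    congr 1
    · simp
    · refine Finset.sum_congr rfl fun j hj => ?_
      have : j ≠ i := (Finset.mem_erase.mp hj).1
      simp [this, Matrix.transpose_apply]
  -- the Gershgorin estimate
  have hest : ‖mu - (B i i : ℂ)‖ ≤ |c| + ∑ j ∈ Finset.univ.erase i, |B j i - c| := by
    have h1 := gersh_est' B' mu w hw hsumw i hmax hwi (c : ℂ)
    have h2 : ∀ j, ‖B' j i - (c : ℂ)‖ = |B j i - c| := by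
      intro j
      rw [hB']
      rw [show (B.map ((↑) : ℝ → ℂ)) j i - (c : ℂ) = ((B j i - c : ℝ) : ℂ) by
        simp [Matrix.map_apply]]
      rw [Complex.norm_real, Real.norm_eq_abs]
    have h3 : ‖mu - (B i i : ℂ)‖
        ≤ ‖mu - B' i i + (c : ℂ)‖ + |c| := by
      have : mu - (B i i : ℂ) = (mu - B' i i + (c : ℂ)) + (-(c : ℂ)) := by
        rw [hB']; simp [Matrix.map_apply]
      rw [this]
      calc ‖_‖ ≤ ‖mu - B' i i + (c : ℂ)‖ + ‖-(c : ℂ)‖ :=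
            norm_add_le _ _
        _ = ‖mu - B' i i + (c : ℂ)‖ + |c| := by
            rw [norm_neg, Complex.norm_real, Real.norm_eq_abs]
    calc ‖mu - (B i i : ℂ)‖
        ≤ ‖mu - B' i i + (c : ℂ)‖ + |c| := h3
      _ ≤ (∑ j ∈ Finset.univ.erase i, ‖B' j i - (c : ℂ)‖) + |c| := by
          linarith [h1]
      _ = (∑ j ∈ Finset.univ.erase i, |B j i - c|) + |c| := by
          rw [Finset.sum_congr rfl fun j _ => h2 j]
      _ = |c| + ∑ j ∈ Finset.univ.erase i, |B j i - c| := by ring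
  -- conclude
  refine Set.mem_iUnion.mpr ⟨i, ?_⟩
  rw [secondTypeDisc, Metric.mem_closedBall, Complex.dist_eq]
  have hcenter : ((Bᵀ i i : ℝ) : ℂ) = ((B i i : ℝ) : ℂ) := by rw [Matrix.transpose_apply]
  rw [hcenter]
  calc ‖mu - (B i i : ℂ)‖ ≤ |c| + ∑ j ∈ Finset.univ.erase i, |B j i - c| := hest
    _ = ((sortDesc l0).map (fun x => |x - c|)).sum := hls.symm
    _ ≤ halfSumDiff n (sortDesc l0) := hc
    _ = secondTypeRadius Bᵀ i := rfl
end

section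
/- Let n be an odd integer with n ≥ 3 and let A be an n×n real matrix whose characteristic polynomial (over ℂ) has roots λ₁, λ₂, …, λ_n counted with multiplicity, where λ₁ is real and is associated with a real eigenvector v having no zero components. Let B = S^{-1} A S with S = diag(v). For each j, let β_j and γ_j be, respectively, the opposite in sign of the ((n−1)/2)-th largest and of the ((n+1)/2)-th largest numbers among the n−1 off-diagonal entries b_{1j}, …, b_{j−1,j}, b_{j+1,j}, …, b_{nj} of column j of B, and let F = [b_{ij} + β_j] and G = [b_{ij} + γ_j]. Then for every i ∈ {2, 3, …, n}, λ_i ∈ Γ(F) ∩ Γ(F^T) ∩ Γ(G) ∩ Γ(G^T), where the λ_i for i ≥ 2 are the roots (with multiplicity) of charpoly(A)/(X − λ₁). -/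
open Matrix
open scoped ENNReal

open Polynomial Finset


lemma my_eval_charpoly {n : ℕ} {R : Type*} [CommRing R] (M : Matrix (Fin n) (Fin n) R) (t : R) :
    M.charpoly.eval t = (t • (1 : Matrix (Fin n) (Fin n) R) - M).det := by
  rw [Matrix.charpoly, ← Polynomial.coe_evalRingHom, RingHom.map_det]
  congr 1
  ext i j
  by_cases h : i = j <;>
    simp [h, Matrix.charmatrix_apply, Matrix.map_apply, Matrix.one_apply, Matrix.diagonal_apply]

lemma my_charpoly_transpose {n : ℕ} (M : Matrix (Fin n) (Fin n) ℂ) :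
    (Mᵀ).charpoly = M.charpoly := by
  apply Polynomial.funext
  intro t
  rw [my_eval_charpoly, my_eval_charpoly, ← Matrix.det_transpose (t • 1 - M)]
  congr 1
  simp [Matrix.transpose_sub, Matrix.transpose_smul]

lemma my_charpoly_similar {n : ℕ} (A S : Matrix (Fin n) (Fin n) ℝ) (hS : IsUnit S.det) :
    (S⁻¹ * A * S).charpoly = A.charpoly := by
  apply Polynomial.funext
  intro t
  rw [my_eval_charpoly, my_eval_charpoly]
  have h1 : t • (1 : Matrix (Fin n) (Fin n) ℝ) - S⁻¹ * A * S
      = S⁻¹ * (t • 1 - A) * S := by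
    rw [Matrix.mul_sub, Matrix.sub_mul]
    congr 1
    rw [Matrix.mul_smul, Matrix.mul_one, Matrix.smul_mul, Matrix.nonsing_inv_mul S hS]
  rw [h1, Matrix.det_mul, Matrix.det_mul]
  rw [mul_comm, ← mul_assoc, mul_comm (S.det), ← Matrix.det_mul, Matrix.nonsing_inv_mul S hS]
  simp

lemma charpoly_add_rowconst {n : ℕ} (hn : 0 < n) (B : Matrix (Fin n) (Fin n) ℂ) (lam1 : ℂ)
    (hBe : B *ᵥ (fun _ => 1) = lam1 • (fun _ => (1:ℂ))) (c : Fin n → ℂ) :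
    (B + Matrix.of fun _ j => c j).charpoly * (X - C lam1)
      = B.charpoly * (X - C (lam1 + ∑ j, c j)) := by
  set e : Fin n → ℂ := fun _ => 1 with he
  have he0 : e ≠ 0 := by
    intro h
    have := congrFun h ⟨0, hn⟩
    simp [he] at this
  apply eq_of_infinite_eval_eq
  have hfin : Set.Finite {t : ℂ | B.charpoly.IsRoot t} :=
    finite_setOf_isRoot (B.charpoly_monic.ne_zero)
  refine Set.Infinite.mono ?_ (Set.Finite.infinite_compl hfin)
  · intro t ht
    simp only [Set.mem_compl_iff, Set.mem_setOf_eq, IsRoot, my_eval_charpoly] at ht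
    set Mt := t • (1 : Matrix (Fin n) (Fin n) ℂ) - B with hMt
    have hMtu : IsUnit Mt.det := isUnit_iff_ne_zero.2 ht
    have hMte : Mt *ᵥ e = (t - lam1) • e := by
      rw [hMt, Matrix.sub_mulVec, Matrix.smul_mulVec, Matrix.one_mulVec, hBe, sub_smul]
    have htne : t ≠ lam1 := by
      intro h
      apply ht
      rw [← Matrix.exists_mulVec_eq_zero_iff]
      exact ⟨e, he0, by rw [hMte, h, sub_self, zero_smul]⟩
    have hsub : t - lam1 ≠ 0 := sub_ne_zero.2 htne
    have hMtinve : Mt⁻¹ *ᵥ e = (t - lam1)⁻¹ • e := by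
      have h1 : (t - lam1) • (Mt⁻¹ *ᵥ e) = e := by
        rw [← Matrix.mulVec_smul, ← hMte, Matrix.mulVec_mulVec,
          Matrix.nonsing_inv_mul Mt hMtu, Matrix.one_mulVec]
      have h2 : (t - lam1)⁻¹ • ((t - lam1) • (Mt⁻¹ *ᵥ e)) = (t - lam1)⁻¹ • e := by rw [h1]
      rwa [smul_smul, inv_mul_cancel₀ hsub, one_smul] at h2
    have hdecomp : t • (1 : Matrix (Fin n) (Fin n) ℂ) - (B + Matrix.of fun _ j => c j)
        = Mt + Matrix.replicateCol Unit (-e) * Matrix.replicateRow Unit c := by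
      ext i j
      simp [hMt, Matrix.mul_apply, Matrix.sub_apply, Matrix.add_apply, he]
      ring
    have hdet2 : (Mt + Matrix.replicateCol Unit (-e) * Matrix.replicateRow Unit c).det
        = Mt.det * (1 - (t - lam1)⁻¹ * ∑ j, c j) := by
      rw [Matrix.det_add_replicateCol_mul_replicateRow hMtu]
      congr 1
      rw [Matrix.det_unique]
      have : (Matrix.replicateRow Unit c * Mt⁻¹ * Matrix.replicateCol Unit (-e)) default default
          = c ⬝ᵥ (Mt⁻¹ *ᵥ (-e)) := by
        rw [Matrix.mul_assoc]
        simp [Matrix.mul_apply, Matrix.replicateRow_apply, Matrix.replicateCol_apply, dotProduct,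
          Matrix.mulVec, Finset.mul_sum]
      rw [Matrix.add_apply, Matrix.one_apply_eq, this]
      rw [Matrix.mulVec_neg, hMtinve]
      simp only [dotProduct, he, smul_eq_mul, Pi.smul_apply, Pi.neg_apply, mul_neg,
        mul_one, Finset.sum_neg_distrib]
      rw [Finset.mul_sum]
      ring_nf
      congr 1
      exact Finset.sum_congr rfl fun k _ => by ring
    simp only [Set.mem_setOf_eq, eval_mul, eval_sub, eval_X, eval_C, my_eval_charpoly]
    rw [hdecomp, hdet2]
    have hfac : (1 - (t - lam1)⁻¹ * ∑ j, c j) * (t - lam1) = t - (lam1 + ∑ j, c j) := by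
      field_simp
      ring
    rw [mul_assoc, hfac]

lemma root_of_shift {p q : ℂ[X]} (hq : q.Monic) (a w μ : ℂ)
    (hid : q * (X - C a) = p * (X - C w))
    (hm : (if μ = a then 2 else 1) ≤ p.rootMultiplicity μ) : q.IsRoot μ := by
  classical
  have hq0 : q ≠ 0 := hq.ne_zero
  have hp0 : p ≠ 0 := by
    intro h
    rw [h, zero_mul] at hid
    exact mul_ne_zero hq0 (X_sub_C_ne_zero a) hid
  have h1 := congrArg (rootMultiplicity μ) hid
  rw [rootMultiplicity_mul (mul_ne_zero hq0 (X_sub_C_ne_zero a)),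
    rootMultiplicity_mul (mul_ne_zero hp0 (X_sub_C_ne_zero w)),
    rootMultiplicity_X_sub_C, rootMultiplicity_X_sub_C] at h1
  rw [← rootMultiplicity_pos hq0]
  by_cases hμa : μ = a
  · rw [if_pos hμa] at hm h1
    omega
  · rw [if_neg hμa] at hm h1
    by_cases hμw : μ = w
    · rw [if_pos hμw] at h1; omega
    · rw [if_neg hμw] at h1; omega


lemma brauer_row {n : ℕ} (N : Matrix (Fin n) (Fin n) ℂ) (μ : ℂ) (x : Fin n → ℂ)
    (hNx : N *ᵥ x = μ • x) (r : Fin n) (c : ℝ)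
    (hc : ∀ k, k ≠ r → ‖x k‖ ≤ c) :
    ‖μ - N r r‖ * ‖x r‖ ≤
      (∑ k ∈ Finset.univ.filter fun k => k ≠ r, ‖N r k‖) * c := by
  have hrow : ∑ k, N r k * x k = μ * x r := congrFun hNx r
  have hsplit : N r r * x r + ∑ k ∈ Finset.univ.filter (fun k => k ≠ r), N r k * x k
      = ∑ k, N r k * x k := by
    rw [Finset.filter_ne']
    exact Finset.add_sum_erase Finset.univ (fun k => N r k * x k) (Finset.mem_univ r)
  have key : (μ - N r r) * x r = ∑ k ∈ Finset.univ.filter (fun k => k ≠ r), N r k * x k := by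
    rw [sub_mul, ← hrow, ← hsplit]; ring
  calc ‖μ - N r r‖ * ‖x r‖
      = ‖(μ - N r r) * x r‖ := (norm_mul _ _).symm
    _ = ‖∑ k ∈ Finset.univ.filter (fun k => k ≠ r), N r k * x k‖ := by rw [key]
    _ ≤ ∑ k ∈ Finset.univ.filter (fun k => k ≠ r), ‖N r k * x k‖ :=
        norm_sum_le _ _
    _ ≤ ∑ k ∈ Finset.univ.filter (fun k => k ≠ r), ‖N r k‖ * c := by
        apply Finset.sum_le_sum
        intro k hk
        rw [norm_mul]
        exact mul_le_mul_of_nonneg_left (hc k (Finset.mem_filter.1 hk).2) (norm_nonneg _)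
    _ = _ := by rw [← Finset.sum_mul]

lemma brauer_mem {n : ℕ} (hn : 2 ≤ n) (M : Matrix (Fin n) (Fin n) ℝ) (μ : ℂ)
    (h : ((M.map ((↑) : ℝ → ℂ)).charpoly).IsRoot μ) : μ ∈ brauerSet M := by
  set N := M.map ((↑) : ℝ → ℂ) with hN
  -- get an eigenvector
  have hdet : (μ • (1 : Matrix (Fin n) (Fin n) ℂ) - N).det = 0 := by
    rw [← my_eval_charpoly]; exact h
  obtain ⟨x, hx0, hx⟩ := (Matrix.exists_mulVec_eq_zero_iff).2 hdet
  have hNx : N *ᵥ x = μ • x := by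
    have := hx
    rw [Matrix.sub_mulVec, sub_eq_zero, Matrix.smul_mulVec, Matrix.one_mulVec] at this
    exact this.symm
  -- choose the two largest components
  obtain ⟨i, -, hi⟩ := Finset.exists_max_image (Finset.univ : Finset (Fin n))
    (fun k => ‖x k‖) ⟨⟨0, by omega⟩, Finset.mem_univ _⟩
  have hiuniv : ∀ k, ‖x k‖ ≤ ‖x i‖ := fun k => hi k (Finset.mem_univ k)
  have hne : ((Finset.univ : Finset (Fin n)).erase i).Nonempty := by
    rw [← Finset.card_pos, Finset.card_erase_of_mem (Finset.mem_univ i)]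
    simp only [Finset.card_univ, Fintype.card_fin]; omega
  obtain ⟨j, hjmem, hj⟩ := Finset.exists_max_image _ (fun k => ‖x k‖) hne
  have hij : j ≠ i := Finset.ne_of_mem_erase hjmem
  have hjother : ∀ k, k ≠ i → ‖x k‖ ≤ ‖x j‖ := by
    intro k hk
    exact hj k (Finset.mem_erase.2 ⟨hk, Finset.mem_univ k⟩)
  have hxi : x i ≠ 0 := by
    intro hxi
    apply hx0
    funext k
    have h' := hiuniv k
    rw [hxi] at h'
    exact norm_eq_zero.1 (le_antisymm (by simpa using h') (norm_nonneg _))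
  -- the two row estimates (in terms of N)
  have h1 := brauer_row N μ x hNx i (‖x j‖) hjother
  have h2 := brauer_row N μ x hNx j (‖x i‖) (fun k _ => hiuniv k)
  -- translate abs of entries of N to real abs of M
  have hNent : ∀ r k : Fin n, ‖N r k‖ = |M r k| := by
    intro r k; simp [hN, Matrix.map_apply, Complex.norm_real, Real.norm_eq_abs]
  have hNd : ∀ r : Fin n, μ - N r r = μ - ((M r r : ℝ) : ℂ) := by
    intro r; simp [hN, Matrix.map_apply]
  set Ri := ∑ k ∈ Finset.univ.filter fun k => k ≠ i, |M i k| with hRi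
  set Rj := ∑ k ∈ Finset.univ.filter fun k => k ≠ j, |M j k| with hRj
  have hRinn : 0 ≤ Ri := Finset.sum_nonneg fun k _ => abs_nonneg _
  have hRjnn : 0 ≤ Rj := Finset.sum_nonneg fun k _ => abs_nonneg _
  have h1' : ‖μ - ((M i i : ℝ):ℂ)‖ * ‖x i‖ ≤ Ri * ‖x j‖ := by
    rw [← hNd]
    calc ‖μ - N i i‖ * ‖x i‖ ≤ _ := h1
    _ = Ri * ‖x j‖ := by rw [hRi]; congr 1; exact Finset.sum_congr rfl fun k _ => hNent i k
  have h2' : ‖μ - ((M j j : ℝ):ℂ)‖ * ‖x j‖ ≤ Rj * ‖x i‖ := by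
    rw [← hNd]
    calc ‖μ - N j j‖ * ‖x j‖ ≤ _ := h2
    _ = Rj * ‖x i‖ := by rw [hRj]; congr 1; exact Finset.sum_congr rfl fun k _ => hNent j k
  -- main inequality for the pair (i, j)
  have main : ‖μ - ((M i i : ℝ):ℂ)‖ * ‖μ - ((M j j : ℝ):ℂ)‖ ≤ Ri * Rj := by
    by_cases hxj : x j = 0
    · -- then μ = M i i
      have hzero : ∀ k, k ≠ i → x k = 0 := by
        intro k hk
        have h' := hjother k hk
        rw [hxj] at h'
        exact norm_eq_zero.1 (le_antisymm (by simpa using h') (norm_nonneg _))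
      have hdiag : μ = ((M i i : ℝ) : ℂ) := by
        have hrow : ∑ k, N i k * x k = μ * x i := congrFun hNx i
        have : ∑ k, N i k * x k = N i i * x i := by
          apply Finset.sum_eq_single_of_mem i (Finset.mem_univ i)
          intro k _ hk
          rw [hzero k hk, mul_zero]
        rw [this] at hrow
        have heq := mul_right_cancel₀ hxi hrow.symm
        rw [heq]; simp [hN, Matrix.map_apply]
      rw [hdiag, sub_self]
      simpa using mul_nonneg hRinn hRjnn
    · have hxjpos : 0 < ‖x j‖ := by
        simpa [norm_pos_iff] using hxj
      have hxipos : 0 < ‖x i‖ := by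
        simpa [norm_pos_iff] using hxi
      have hprod := mul_le_mul h1' h2' (mul_nonneg (norm_nonneg _) (norm_nonneg _))
        (mul_nonneg hRinn (norm_nonneg _))
      have hpos := mul_pos hxipos hxjpos
      have : ‖μ - ((M i i : ℝ):ℂ)‖ * ‖μ - ((M j j : ℝ):ℂ)‖
          * (‖x i‖ * ‖x j‖) ≤ Ri * Rj * (‖x i‖ * ‖x j‖) := by
        calc _ = (‖μ - ((M i i : ℝ):ℂ)‖ * ‖x i‖) *
              (‖μ - ((M j j : ℝ):ℂ)‖ * ‖x j‖) := by ring
        _ ≤ (Ri * ‖x j‖) * (Rj * ‖x i‖) := hprod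
        _ = Ri * Rj * (‖x i‖ * ‖x j‖) := by ring
      exact le_of_mul_le_mul_right this hpos
  -- conclude membership
  rcases (Ne.symm hij).lt_or_gt with hlt | hlt
  · refine Set.mem_iUnion.2 ⟨i, Set.mem_iUnion.2 ⟨j, Set.mem_iUnion.2 ⟨hlt, ?_⟩⟩⟩
    exact main
  · refine Set.mem_iUnion.2 ⟨j, Set.mem_iUnion.2 ⟨i, Set.mem_iUnion.2 ⟨hlt, ?_⟩⟩⟩
    show ‖μ - ((M j j : ℝ):ℂ)‖ * ‖μ - ((M i i : ℝ):ℂ)‖ ≤ _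
    rw [mul_comm]
    rw [mul_comm (∑ k ∈ Finset.univ.filter fun k => k ≠ j, |M j k|)]
    exact main


lemma main_aux {n : ℕ} (hn : 3 ≤ n) (B : Matrix (Fin n) (Fin n) ℝ) (lam1C μ : ℂ)
    (hBeC : (B.map ((↑) : ℝ → ℂ)) *ᵥ (fun _ => 1) = lam1C • (fun _ => (1:ℂ)))
    (hmult : (if μ = lam1C then 2 else 1) ≤ (B.map ((↑) : ℝ → ℂ)).charpoly.rootMultiplicity μ)
    (c : Fin n → ℝ) (Fc : Matrix (Fin n) (Fin n) ℝ) (hFc : ∀ i j, Fc i j = B i j + c j) :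
    μ ∈ brauerSet Fc ∧ μ ∈ brauerSet Fcᵀ := by
  have hmap : Fc.map ((↑) : ℝ → ℂ)
      = B.map ((↑) : ℝ → ℂ) + Matrix.of fun _ j => ((c j : ℝ) : ℂ) := by
    ext i j
    simp [Matrix.map_apply, hFc]
  have hid := charpoly_add_rowconst (by omega) (B.map ((↑) : ℝ → ℂ)) lam1C hBeC
    (fun j => ((c j : ℝ) : ℂ))
  rw [← hmap] at hid
  have hroot : ((Fc.map ((↑) : ℝ → ℂ)).charpoly).IsRoot μ :=
    root_of_shift (Matrix.charpoly_monic _) _ _ μ hid hmult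
  constructor
  · exact brauer_mem (by omega) Fc μ hroot
  · apply brauer_mem (by omega) Fcᵀ μ
    have htr : (Fcᵀ).map ((↑) : ℝ → ℂ) = (Fc.map ((↑) : ℝ → ℂ))ᵀ := rfl
    rw [htr, my_charpoly_transpose]
    exact hroot

/-- Theorem 8, odd case: with `B = S⁻¹ A S`, `S = diag v`, and `F`, `G`
built from the negatives of the `((n-1)/2)`-th and `((n+1)/2)`-th largest
off-diagonal column entries of `B`, all eigenvalues `λ₂, …, λ_n` of `A` other than
`λ₁` lie in `Γ(F) ∩ Γ(Fᵀ) ∩ Γ(G) ∩ Γ(Gᵀ)`. -/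
theorem stmt9 {n : ℕ} (hodd : Odd n) (hn : 3 ≤ n) (A : Matrix (Fin n) (Fin n) ℝ)
    (lam : Fin n → ℂ)
    (hroots : ((A.map ((↑) : ℝ → ℂ)).charpoly).roots = Finset.univ.val.map lam)
    (lam1 : ℝ) (hlam1 : lam ⟨0, by omega⟩ = (lam1 : ℂ))
    (v : Fin n → ℝ) (hv : ∀ i, v i ≠ 0) (hAv : A *ᵥ v = lam1 • v)
    (S B : Matrix (Fin n) (Fin n) ℝ) (hS : S = Matrix.diagonal v) (hB : B = S⁻¹ * A * S)
    (F G : Matrix (Fin n) (Fin n) ℝ)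
    (hF : ∀ i j, F i j = B i j + -kthLargestOffDiag B j ((n - 1) / 2))
    (hG : ∀ i j, G i j = B i j + -kthLargestOffDiag B j ((n + 1) / 2))
    (i : Fin n) (hi : i ≠ ⟨0, by omega⟩) :
    lam i ∈ brauerSet F ∩ brauerSet Fᵀ ∩ brauerSet G ∩ brauerSet Gᵀ := by
  classical
  set μ := lam i with hμdef
  have hSdet : IsUnit S.det := by
    rw [hS, Matrix.det_diagonal, isUnit_iff_ne_zero]
    exact Finset.prod_ne_zero_iff.2 fun k _ => hv k
  have hcp : B.charpoly = A.charpoly := by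
    rw [hB]; exact my_charpoly_similar A S hSdet
  have hcpC : (B.map ((↑) : ℝ → ℂ)).charpoly = (A.map ((↑) : ℝ → ℂ)).charpoly := by
    calc (B.map ((↑) : ℝ → ℂ)).charpoly
        = B.charpoly.map Complex.ofRealHom := Matrix.charpoly_map B Complex.ofRealHom
      _ = A.charpoly.map Complex.ofRealHom := by rw [hcp]
      _ = (A.map ((↑) : ℝ → ℂ)).charpoly := (Matrix.charpoly_map A Complex.ofRealHom).symm
  have hSe : S *ᵥ (fun _ => 1) = v := by
    rw [hS]; ext k; simp [Matrix.mulVec_diagonal]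
  have hSiv : S⁻¹ *ᵥ v = (fun _ => 1) := by
    rw [← hSe, Matrix.mulVec_mulVec, Matrix.nonsing_inv_mul S hSdet, Matrix.one_mulVec]
  have hBe : B *ᵥ (fun _ => 1) = lam1 • (fun _ => (1:ℝ)) := by
    rw [hB, ← Matrix.mulVec_mulVec, ← Matrix.mulVec_mulVec, hSe, hAv, Matrix.mulVec_smul, hSiv]
  have hBeC : (B.map ((↑) : ℝ → ℂ)) *ᵥ (fun _ => 1) = ((lam1 : ℂ)) • (fun _ => (1:ℂ)) := by
    funext k
    have h := congrFun hBe k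
    simp only [Matrix.mulVec, dotProduct, Pi.smul_apply, smul_eq_mul, mul_one] at h ⊢
    simp only [Matrix.map_apply]
    exact_mod_cast congrArg Complex.ofReal h
  have hmult : (if μ = (lam1 : ℂ) then 2 else 1)
      ≤ (B.map ((↑) : ℝ → ℂ)).charpoly.rootMultiplicity μ := by
    rw [hcpC, ← Polynomial.count_roots, hroots, Multiset.count_map]
    have hfv : Multiset.filter (fun a => μ = lam a) Finset.univ.val
        = (Finset.univ.filter (fun a => μ = lam a)).val := rfl
    rw [hfv, ← Finset.card_def]
    by_cases hμ : μ = (lam1 : ℂ)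
    · rw [if_pos hμ]
      have hsub : ({⟨0, by omega⟩, i} : Finset (Fin n))
          ⊆ Finset.univ.filter (fun a => μ = lam a) := by
        intro a ha
        simp only [Finset.mem_insert, Finset.mem_singleton] at ha
        rcases ha with rfl | rfl
        · exact Finset.mem_filter.2 ⟨Finset.mem_univ _, by rw [hμ, hlam1]⟩
        · exact Finset.mem_filter.2 ⟨Finset.mem_univ _, rfl⟩
      have hcard : ({⟨0, by omega⟩, i} : Finset (Fin n)).card = 2 :=
        Finset.card_pair (Ne.symm hi)
      calc (2:ℕ) = _ := hcard.symm
        _ ≤ _ := Finset.card_le_card hsub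
    · rw [if_neg hμ]
      have hmem : i ∈ Finset.univ.filter (fun a => μ = lam a) :=
        Finset.mem_filter.2 ⟨Finset.mem_univ _, rfl⟩
      exact Finset.card_pos.2 ⟨i, hmem⟩
  obtain ⟨hF1, hF2⟩ := main_aux hn B (lam1 : ℂ) μ hBeC hmult
    (fun j => -kthLargestOffDiag B j ((n - 1) / 2)) F hF
  obtain ⟨hG1, hG2⟩ := main_aux hn B (lam1 : ℂ) μ hBeC hmult
    (fun j => -kthLargestOffDiag B j ((n + 1) / 2)) G hG
  exact ⟨⟨⟨hF1, hF2⟩, hG1⟩, hG2⟩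
end
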